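/- Let f: ℝ^d → ℝ be twice continuously differentiable with Hessian uniformly bounded in operator norm by M. Let ε ~ N(0, σ²I_d), r = f(z) − s, and g = ∇f(z). Then |E[|f(z+ε) − s|] − E[|r + gᵀε|]| ≤ (M/2)·σ²·d. -/

import Mathlib

open MeasureTheory ProbabilityTheory Real
open scoped ENNReal NNReal

lemma integrable_sq_mul_exp {b : ℝ} (hb : 0 < b) :
    Integrable fun x : ℝ => x ^ 2 * rexp (-b * x ^ 2) := by
  have := integrable_rpow_mul_exp_neg_mul_sq hb (s := 2) (by norm_num)
  simpa [Real.rpow_natCast] using this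

lemma integral_sq_mul_exp {b : ℝ} (hb : 0 < b) :
    ∫ x : ℝ, x ^ 2 * rexp (-b * x ^ 2) = √(π / b) / (2 * b) := by
  set F : ℝ → ℝ := fun x => -(x * rexp (-b * x ^ 2)) / (2 * b) with hF
  have hderiv : ∀ x : ℝ, HasDerivAt F (x ^ 2 * rexp (-b * x ^ 2) - rexp (-b * x ^ 2) / (2 * b)) x := by
    intro x
    have h1 : HasDerivAt (fun x : ℝ => x * rexp (-b * x ^ 2))
        (1 * rexp (-b * x ^ 2) + x * (rexp (-b * x ^ 2) * (-b * (2 * x ^ 1)))) x := by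
      exact (hasDerivAt_id x).mul (((hasDerivAt_pow 2 x).const_mul (-b)).exp)
    have h2 := (h1.neg).div_const (2 * b)
    refine h2.congr_deriv ?_
    have hb0 : b ≠ 0 := hb.ne'
    field_simp
    ring
  have hF'int : Integrable (fun x : ℝ => x ^ 2 * rexp (-b * x ^ 2) - rexp (-b * x ^ 2) / (2 * b)) :=
    (integrable_sq_mul_exp hb).sub ((integrable_exp_neg_mul_sq hb).div_const _)
  have hFint : Integrable F := by
    simpa [hF, neg_div] using ((integrable_mul_exp_neg_mul_sq hb).neg.div_const (2 * b))
  have h0 : ∫ x : ℝ, (x ^ 2 * rexp (-b * x ^ 2) - rexp (-b * x ^ 2) / (2 * b)) = 0 :=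
    integral_eq_zero_of_hasDerivAt_of_integrable hderiv hF'int hFint
  have hsplit := integral_sub (integrable_sq_mul_exp hb) ((integrable_exp_neg_mul_sq hb).div_const (2 * b))
  rw [hsplit] at h0
  have hgauss : ∫ x : ℝ, rexp (-b * x ^ 2) / (2 * b) = √(π / b) / (2 * b) := by
    rw [integral_div, integral_gaussian]
  linarith [h0, hgauss]

lemma gaussianPDF_eq_coe_toNNReal (μ : ℝ) (v : ℝ≥0) :
    gaussianPDF μ v = fun x => ((gaussianPDFReal μ v x).toNNReal : ℝ≥0∞) := rfl

lemma integrable_sq_gaussianReal (v : ℝ≥0) :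
    Integrable (fun x : ℝ => x ^ 2) (gaussianReal 0 v) := by
  by_cases hv : v = 0
  · rw [hv, gaussianReal_zero_var]
    refine (integrable_const ((0:ℝ)^2)).mono' (by fun_prop) ?_
    simp [ae_dirac_eq]
  · rw [gaussianReal_of_var_ne_zero 0 hv, gaussianPDF_eq_coe_toNNReal,
      integrable_withDensity_iff_integrable_smul
        ((measurable_gaussianPDFReal 0 v).real_toNNReal)]
    have hb : 0 < (2 * (v : ℝ))⁻¹ := by positivity
    apply (((integrable_sq_mul_exp hb).const_mul ((√(2 * π * v))⁻¹))).congr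
    filter_upwards with x
    rw [NNReal.smul_def, Real.coe_toNNReal _ (gaussianPDFReal_nonneg 0 v x)]
    simp only [gaussianPDFReal, smul_eq_mul, sub_zero]
    rw [neg_div, div_eq_mul_inv]
    ring

lemma integral_sq_gaussianReal (v : ℝ≥0) :
    ∫ x : ℝ, x ^ 2 ∂(gaussianReal 0 v) = v := by
  by_cases hv : v = 0
  · simp [hv, gaussianReal_zero_var]
  · have hb : 0 < (2 * (v : ℝ))⁻¹ := by positivity
    rw [gaussianReal_of_var_ne_zero 0 hv, gaussianPDF_eq_coe_toNNReal,
      integral_withDensity_eq_integral_smul ((measurable_gaussianPDFReal 0 v).real_toNNReal)]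
    have heq : ∀ x : ℝ, (gaussianPDFReal 0 v x).toNNReal • x ^ 2
        = (√(2 * π * v))⁻¹ * (x ^ 2 * rexp (-(2 * (v:ℝ))⁻¹ * x ^ 2)) := by
      intro x
      rw [NNReal.smul_def, Real.coe_toNNReal _ (gaussianPDFReal_nonneg 0 v x)]
      simp only [gaussianPDFReal, smul_eq_mul, sub_zero]
      rw [neg_div, div_eq_mul_inv]
      ring
    simp_rw [heq]
    rw [integral_const_mul, integral_sq_mul_exp hb]
    have hπv : (0:ℝ) < 2 * π * v := by
      have := pi_pos
      have hv' : (0:ℝ) < v := lt_of_le_of_ne (NNReal.coe_nonneg v) (by exact_mod_cast (Ne.symm hv))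
      positivity
    have h1 : π / (2 * (v:ℝ))⁻¹ = 2 * π * v := by field_simp
    rw [h1]
    have h2 : (2 : ℝ) * (2 * (v:ℝ))⁻¹ = (v:ℝ)⁻¹ := by
      field_simp
    rw [h2]
    rw [div_eq_mul_inv, inv_inv, ← mul_assoc, inv_mul_cancel₀ (by positivity : √(2 * π * (v:ℝ)) ≠ 0), one_mul]

noncomputable def gaussPi (d : ℕ) (σ : NNReal) : Measure (EuclideanSpace ℝ (Fin d)) :=
  Measure.map (MeasurableEquiv.toLp 2 (Fin d → ℝ))
    (Measure.pi fun _ : Fin d => gaussianReal 0 (σ ^ 2))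

instance (d : ℕ) (σ : NNReal) : IsProbabilityMeasure (gaussPi d σ) := by
  unfold gaussPi
  exact Measure.isProbabilityMeasure_map (MeasurableEquiv.toLp 2 (Fin d → ℝ)).measurable.aemeasurable

lemma pi_integral_eval_sq {d : ℕ} (σ : NNReal) (i : Fin d) :
    ∫ x : EuclideanSpace ℝ (Fin d), (x i) ^ 2 ∂(gaussPi d σ) = (σ : ℝ) ^ 2 := by
  letI : MeasureSpace ℝ := ⟨gaussianReal 0 (σ ^ 2)⟩
  haveI : IsProbabilityMeasure (volume : Measure ℝ) :=
    instIsProbabilityMeasureGaussianReal 0 (σ ^ 2)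
  have key := integral_fintype_prod_eq_prod (ι := Fin d) (E := fun _ => ℝ)
      (fun j (y : ℝ) => if j = i then y ^ 2 else 1) (μ := fun _ => (volume : Measure ℝ))
  have hL : ∫ x : (j : Fin d) → ℝ, ∏ j, (if j = i then (x j) ^ 2 else 1)
        ∂(Measure.pi fun _ => (volume : Measure ℝ))
      = ∫ x : EuclideanSpace ℝ (Fin d), (x i) ^ 2 ∂(gaussPi d σ) := by
    rw [gaussPi, integral_map_equiv]
    refine integral_congr_ae (Filter.Eventually.of_forall fun x => ?_)
    simp [Finset.prod_ite_eq']
  have hR : ∀ j : Fin d, (∫ y : ℝ, (if j = i then y ^ 2 else 1)) = if j = i then (σ : ℝ) ^ 2 else 1 := by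
    intro j
    rcases eq_or_ne j i with h | h
    · simp only [h, if_true]
      have := integral_sq_gaussianReal (σ ^ 2)
      rw [NNReal.coe_pow] at this
      exact this
    · simp [h]
  rw [hL] at key
  rw [key]
  simp_rw [hR]
  simp [Finset.prod_ite_eq']

lemma pi_integrable_eval_sq {d : ℕ} (σ : NNReal) (i : Fin d) :
    Integrable (fun x : EuclideanSpace ℝ (Fin d) => (x i) ^ 2) (gaussPi d σ) := by
  letI : MeasureSpace ℝ := ⟨gaussianReal 0 (σ ^ 2)⟩
  haveI : IsProbabilityMeasure (volume : Measure ℝ) :=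
    instIsProbabilityMeasureGaussianReal 0 (σ ^ 2)
  have key := Integrable.fintype_prod_dep (ι := Fin d) (E := fun _ => ℝ)
      (f := fun j (y : ℝ) => if j = i then y ^ 2 else 1) (μ := fun _ => (volume : Measure ℝ)) ?_
  · have : (Measure.pi fun _ : Fin d => (volume : Measure ℝ))
        = Measure.pi fun _ => gaussianReal 0 (σ ^ 2) := rfl
    rw [this] at key
    rw [gaussPi, integrable_map_equiv]
    refine key.congr (Filter.Eventually.of_forall fun x => ?_)
    simp [Finset.prod_ite_eq']
  · intro j
    rcases eq_or_ne j i with h | h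
    · simp only [h, if_true]
      exact integrable_sq_gaussianReal (σ ^ 2)
    · simp [h]

lemma euclid_norm_sq {d : ℕ} (x : EuclideanSpace ℝ (Fin d)) :
    ‖x‖ ^ 2 = ∑ i, (x i) ^ 2 := by
  rw [EuclideanSpace.norm_eq, Real.sq_sqrt (by positivity)]
  simp [Real.norm_eq_abs, sq_abs]

lemma pi_integrable_norm_sq {d : ℕ} (σ : NNReal) :
    Integrable (fun x : EuclideanSpace ℝ (Fin d) => ‖x‖ ^ 2) (gaussPi d σ) := by
  refine (integrable_finset_sum Finset.univ fun i _ => pi_integrable_eval_sq σ i).congr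
    (Filter.Eventually.of_forall fun x => (euclid_norm_sq x).symm)

lemma pi_integral_norm_sq {d : ℕ} (σ : NNReal) :
    ∫ x : EuclideanSpace ℝ (Fin d), ‖x‖ ^ 2 ∂(gaussPi d σ) = (d : ℝ) * (σ : ℝ) ^ 2 := by
  rw [integral_congr_ae (Filter.Eventually.of_forall fun x => euclid_norm_sq x),
    integral_finset_sum Finset.univ fun i _ => pi_integrable_eval_sq σ i]
  simp [pi_integral_eval_sq]

lemma taylor_bound {E : Type*} [NormedAddCommGroup E] [NormedSpace ℝ E]
    (f : E → ℝ) (hf : ContDiff ℝ 2 f) (M : ℝ)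
    (hM : ∀ ξ, ‖fderiv ℝ (fderiv ℝ f) ξ‖ ≤ M) (z ε : E) :
    |f (z + ε) - f z - fderiv ℝ f z ε| ≤ M / 2 * ‖ε‖ ^ 2 := by
  have hM0 : 0 ≤ M := le_trans (norm_nonneg (fderiv ℝ (fderiv ℝ f) 0)) (hM 0)
  have hd : Differentiable ℝ f := hf.differentiable two_ne_zero
  have hd' : Differentiable ℝ (fderiv ℝ f) :=
    (hf.fderiv_right (m := 1) (by norm_num)).differentiable one_ne_zero
  have hLip : LipschitzWith M.toNNReal (fderiv ℝ f) := by
    apply lipschitzWith_of_nnnorm_fderiv_le hd'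
    intro x
    rw [← NNReal.coe_le_coe, coe_nnnorm]
    exact le_trans (hM x) (Real.le_coe_toNNReal M)
  have hlip : ∀ a b : E, ‖fderiv ℝ f a - fderiv ℝ f b‖ ≤ M * ‖a - b‖ := by
    intro a b
    have := hLip.dist_le_mul a b
    rwa [dist_eq_norm, dist_eq_norm, Real.coe_toNNReal _ hM0] at this
  set L := fderiv ℝ f z with hL
  set ψ : ℝ → ℝ := fun t => f (z + t • ε) - t * L ε with hψdef
  have hψ : ∀ t : ℝ, HasDerivAt ψ (fderiv ℝ f (z + t • ε) ε - L ε) t := by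
    intro t
    have h1 : HasDerivAt (fun t : ℝ => z + t • ε) ε t := by
      simpa using ((hasDerivAt_id t).smul_const ε).const_add z
    have h2 : HasDerivAt (fun t : ℝ => f (z + t • ε)) (fderiv ℝ f (z + t • ε) ε) t := by
      have := (hd (z + t • ε)).hasFDerivAt.comp_hasDerivAt t h1
      exact this
    exact h2.sub (hasDerivAt_mul_const (L ε))
  have hcont : Continuous fun t : ℝ => fderiv ℝ f (z + t • ε) ε - L ε := by
    have h3 : Continuous (fderiv ℝ f) := hf.continuous_fderiv two_ne_zero
    have h4 : Continuous fun t : ℝ => fderiv ℝ f (z + t • ε) :=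
      h3.comp (by continuity)
    exact (((ContinuousLinearMap.apply ℝ ℝ ε).continuous).comp h4).sub continuous_const
  have hFTC : ψ 1 - ψ 0 = ∫ t in (0:ℝ)..1, (fderiv ℝ f (z + t • ε) ε - L ε) := by
    rw [intervalIntegral.integral_eq_sub_of_hasDerivAt (fun t _ => hψ t)
      (hcont.intervalIntegrable 0 1)]
  have hbound : ∀ t ∈ Set.uIoc (0:ℝ) 1,
      ‖fderiv ℝ f (z + t • ε) ε - L ε‖ ≤ M * ‖ε‖ ^ 2 * t := by
    intro t ht
    rw [Set.uIoc_of_le zero_le_one] at ht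
    have ht0 : 0 ≤ t := le_of_lt ht.1
    have : ‖fderiv ℝ f (z + t • ε) ε - L ε‖ ≤ ‖fderiv ℝ f (z + t • ε) - L‖ * ‖ε‖ := by
      rw [show fderiv ℝ f (z + t • ε) ε - L ε = (fderiv ℝ f (z + t • ε) - L) ε by simp]
      exact (fderiv ℝ f (z + t • ε) - L).le_opNorm ε
    refine le_trans this ?_
    have h5 : ‖fderiv ℝ f (z + t • ε) - L‖ ≤ M * (t * ‖ε‖) := by
      have := hlip (z + t • ε) z
      simpa [norm_smul, abs_of_nonneg ht0] using this
    calc ‖fderiv ℝ f (z + t • ε) - L‖ * ‖ε‖ ≤ M * (t * ‖ε‖) * ‖ε‖ :=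
          mul_le_mul_of_nonneg_right h5 (norm_nonneg _)
      _ = M * ‖ε‖ ^ 2 * t := by ring
  have habs : |ψ 1 - ψ 0| ≤ M * ‖ε‖ ^ 2 * (1 / 2) := by
    rw [hFTC, ← Real.norm_eq_abs]
    have hae : ∀ᵐ t ∂(volume.restrict (Set.uIoc (0:ℝ) 1)),
        ‖fderiv ℝ f (z + t • ε) ε - L ε‖ ≤ M * ‖ε‖ ^ 2 * t := by
      filter_upwards [ae_restrict_mem measurableSet_uIoc] with t ht
      exact hbound t ht
    have hgi : IntervalIntegrable (fun t => M * ‖ε‖ ^ 2 * t) volume 0 1 :=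
      (continuous_const.mul continuous_id).intervalIntegrable 0 1
    refine le_trans (intervalIntegral.norm_integral_le_of_norm_le zero_le_one
      (by rw [Set.uIoc_of_le zero_le_one] at hae; exact (ae_restrict_iff' measurableSet_Ioc).1 hae) hgi) ?_
    rw [intervalIntegral.integral_const_mul, integral_id]
    norm_num
  have hval : ψ 1 - ψ 0 = f (z + ε) - f z - L ε := by
    simp [hψdef, one_smul]
    ring
  rw [hval] at habs
  calc |f (z + ε) - f z - L ε| ≤ M * ‖ε‖ ^ 2 * (1 / 2) := habs
    _ = M / 2 * ‖ε‖ ^ 2 := by ring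

/-- first-order Gaussian-smoothed ℓ1 approximation bound. -/
theorem stmt0 {d : ℕ} (f : EuclideanSpace ℝ (Fin d) → ℝ) (hf : ContDiff ℝ 2 f)
    (M : ℝ) (hM : ∀ ξ, ‖fderiv ℝ (fderiv ℝ f) ξ‖ ≤ M)
    (σ : NNReal) (z : EuclideanSpace ℝ (Fin d)) (s : ℝ) :
    |(∫ ε, |f (z + ε) - s| ∂(gaussPi d σ)) -
        ∫ ε, |(f z - s) + (inner ℝ (gradient f z) ε : ℝ)| ∂(gaussPi d σ)| ≤
      (M / 2) * (σ : ℝ) ^ 2 * d := by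
  have hM0 : 0 ≤ M := le_trans (norm_nonneg (fderiv ℝ (fderiv ℝ f) 0)) (hM 0)
  have hinner : ∀ ε : EuclideanSpace ℝ (Fin d),
      (inner ℝ (gradient f z) ε : ℝ) = fderiv ℝ f z ε := fun ε =>
    InnerProductSpace.toDual_symm_apply
  -- pointwise bound
  have hpt : ∀ ε : EuclideanSpace ℝ (Fin d),
      |abs (f (z + ε) - s) - abs ((f z - s) + (inner ℝ (gradient f z) ε : ℝ))| ≤ M / 2 * ‖ε‖ ^ 2 := by
    intro ε
    refine le_trans (abs_abs_sub_abs_le_abs_sub _ _) ?_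
    have : f (z + ε) - s - ((f z - s) + (inner ℝ (gradient f z) ε : ℝ))
        = f (z + ε) - f z - fderiv ℝ f z ε := by
      rw [hinner]; ring
    rw [this]
    exact taylor_bound f hf M hM z ε
  have hint2 : Integrable (fun ε : EuclideanSpace ℝ (Fin d) => M / 2 * ‖ε‖ ^ 2) (gaussPi d σ) :=
    (pi_integrable_norm_sq σ).const_mul _
  have hcontB : Continuous fun ε : EuclideanSpace ℝ (Fin d) =>
      |(f z - s) + (inner ℝ (gradient f z) ε : ℝ)| := by
    exact (continuous_const.add (continuous_const.inner continuous_id)).abs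
  have hIntB : Integrable (fun ε : EuclideanSpace ℝ (Fin d) =>
      |(f z - s) + (inner ℝ (gradient f z) ε : ℝ)|) (gaussPi d σ) := by
    refine Integrable.mono' (g := fun ε => |f z - s| + ‖gradient f z‖ * (1 + ‖ε‖ ^ 2))
      ((integrable_const _).add (((integrable_const 1).add (pi_integrable_norm_sq σ)).const_mul _))
      hcontB.aestronglyMeasurable ?_
    filter_upwards with ε
    rw [Real.norm_eq_abs, abs_abs]
    refine le_trans (abs_add_le _ _) ?_
    gcongr
    refine le_trans (abs_real_inner_le_norm _ _) ?_
    have h1 : ‖ε‖ ≤ 1 + ‖ε‖ ^ 2 := by nlinarith [norm_nonneg ε, sq_nonneg (‖ε‖ - 1)]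
    have h2 : (0:ℝ) ≤ ‖gradient f z‖ := norm_nonneg _
    nlinarith
  have hcontA : Continuous fun ε : EuclideanSpace ℝ (Fin d) => |f (z + ε) - s| := by
    exact ((hf.continuous.comp (continuous_const.add continuous_id)).sub continuous_const).abs
  have hIntA : Integrable (fun ε : EuclideanSpace ℝ (Fin d) => |f (z + ε) - s|) (gaussPi d σ) := by
    refine Integrable.mono'
      (g := fun ε => |(f z - s) + (inner ℝ (gradient f z) ε : ℝ)| + M / 2 * ‖ε‖ ^ 2)
      (hIntB.add hint2) hcontA.aestronglyMeasurable ?_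
    filter_upwards with ε
    rw [Real.norm_eq_abs, abs_abs]
    have := hpt ε
    have h3 := abs_le.1 this
    linarith [h3.2]
  rw [← integral_sub hIntA hIntB]
  rw [← Real.norm_eq_abs]
  refine le_trans (norm_integral_le_integral_norm _) ?_
  simp_rw [Real.norm_eq_abs]
  have hmono : ∫ ε, |abs (f (z + ε) - s) - abs ((f z - s) + (inner ℝ (gradient f z) ε : ℝ))| ∂(gaussPi d σ)
      ≤ ∫ ε, M / 2 * ‖ε‖ ^ 2 ∂(gaussPi d σ) :=
    integral_mono (hIntA.sub hIntB).abs hint2 fun ε => hpt ε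
  refine le_trans hmono ?_
  rw [integral_const_mul, pi_integral_norm_sq]
  ring_nf
  exact le_refl _
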